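/- Equivalence of Probabilistic Serial and Round-Robin on the lifted instance: let ≻ be a profile of strict orderings of n agents over m divisible goods. Set T = (n!)^m, and for each good g let G(g) = {g_1, …, g_T} be T indivisible copies of g, with G = ∪_{g=1}^m G(g). Let ≻' be the profile of strict orderings over G defined by: g_k ≻'_a g'_{k'} if and only if g ≻_a g', or g = g' and k < k'. Let A = RR(≻') be the Round-Robin allocation of the mT indivisible goods in G (note n divides mT). Then for every agent a ∈ [n] and every good g ∈ [m], PS_{a,g}(≻) = |A_a ∩ G(g)| / T. -/

import Mathlib

/-- A strict total ordering over goods, given as a list from most preferred to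
least preferred: it must be a duplicate-free enumeration of all goods. -/
def IsOrder {γ : Type*} [Fintype γ] (l : List γ) : Prop :=
  l.Nodup ∧ ∀ g : γ, g ∈ l

/-- An additive valuation `v` (given by its values on single goods) is consistent
with the strict ordering `l` if strictly more valuable goods appear earlier. -/
def Consistent {γ : Type*} [DecidableEq γ] (v : γ → ℝ) (l : List γ) : Prop :=
  ∀ g g' : γ, v g > v g' → l.idxOf g < l.idxOf g'

/-- State of Round-Robin after `s` stages: the set of remaining goods, together
with the bundle picked so far by each agent.  At stage `s` (0-indexed), agent
`s % n` picks his most preferred remaining good. -/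
def rrState {γ : Type*} [DecidableEq γ] [Fintype γ] (n : ℕ) (hn : 0 < n)
    (pref : Fin n → List γ) : ℕ → Finset γ × (Fin n → Finset γ)
  | 0 => (Finset.univ, fun _ => ∅)
  | s + 1 =>
    let st := rrState n hn pref s
    let agent : Fin n := ⟨s % n, Nat.mod_lt s hn⟩
    match (pref agent).find? (fun g => decide (g ∈ st.1)) with
    | none => st
    | some g => (st.1.erase g, Function.update st.2 agent (insert g (st.2 agent)))

/-- The Round-Robin allocation: the bundle of agent `a` after all goods are picked. -/
def rr {γ : Type*} [DecidableEq γ] [Fintype γ] (n : ℕ) (hn : 0 < n)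
    (pref : Fin n → List γ) (a : Fin n) : Finset γ :=
  (rrState n hn pref (Fintype.card γ)).2 a

/-- Agent `a`'s most preferred good in the set `S` of available goods. -/
def psTop {n m : ℕ} (pref : Fin n → List (Fin m)) (S : Finset (Fin m)) (a : Fin n) :
    Option (Fin m) :=
  (pref a).find? (fun g => decide (g ∈ S))

/-- `N(g, S)`: the set of agents whose most preferred available good is `g`. -/
def psN {n m : ℕ} (pref : Fin n → List (Fin m)) (S : Finset (Fin m)) (g : Fin m) :
    Finset (Fin n) :=
  Finset.univ.filter (fun a => psTop pref S a = some g)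

/-- The available goods currently being eaten by at least one agent. -/
def psActive {n m : ℕ} (pref : Fin n → List (Fin m)) (S : Finset (Fin m)) :
    Finset (Fin m) :=
  S.filter (fun g => (psN pref S g).Nonempty)

open scoped Classical in
/-- Combinatorial implementation of Probabilistic Serial.
`psState pref k = (S⁽ᵏ⁾, x⁽ᵏ⁾, t⁽ᵏ⁾)`: after step `k`, the set of available
goods, the partial allocation, and the length `t⁽ᵏ⁾` of step `k` (with `t⁽⁰⁾ = 0`). -/
noncomputable def psState {n m : ℕ} (pref : Fin n → List (Fin m)) :
    ℕ → Finset (Fin m) × (Fin n → Fin m → ℝ) × ℝ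
  | 0 => (Finset.univ, fun _ _ => 0, 0)
  | k + 1 =>
    let st := psState pref k
    let tg : Fin m → ℝ := fun g => (1 - ∑ a, st.2.1 a g) / ((psN pref st.1 g).card : ℝ)
    if h : (psActive pref st.1).Nonempty then
      let t := (psActive pref st.1).inf' h tg
      (st.1.filter (fun g => ¬(g ∈ psActive pref st.1 ∧ tg g = t)),
        fun a g => if psTop pref st.1 a = some g then st.2.1 a g + t else st.2.1 a g,
        t)
    else st

/-- The fractional allocation output by Probabilistic Serial (the mechanism
terminates after at most `m` steps, since each step fully consumes a good). -/
noncomputable def psAlloc {n m : ℕ} (pref : Fin n → List (Fin m)) :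
    Fin n → Fin m → ℝ :=
  (psState pref m).2.1

/-- The lifted ordering over `T` indivisible copies of each of the `m` goods:
copies of a more preferred good come first, and copies of the same good are
ordered by increasing copy index. -/
def liftList {m : ℕ} (T : ℕ) (l : List (Fin m)) : List (Fin m × Fin T) :=
  l.flatMap fun g => (List.finRange T).map fun k => (g, k)


/-! ### Auxiliary machinery -/

lemma find?_mono {α} {p q : α → Bool} {l : List α} {x : α}
    (h : l.find? p = some x) (hqx : q x = true) (himp : ∀ y, q y = true → p y = true) :
    l.find? q = some x := by
  rw [List.find?_eq_some_iff_append] at h ⊢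
  obtain ⟨hp, as, bs, rfl, hfail⟩ := h
  refine ⟨hqx, as, bs, rfl, fun a ha => ?_⟩
  have := hfail a ha
  simp only [Bool.not_eq_true'] at this ⊢
  by_contra hq
  simp only [Bool.not_eq_false] at hq
  rw [himp a hq] at this
  simp at this

lemma find?_finRange (c T : ℕ) (h : c < T) :
    (List.finRange T).find? (fun k => decide (c ≤ k.val)) = some ⟨c, h⟩ := by
  rw [List.find?_eq_some_iff_append]
  refine ⟨by simp, (List.finRange T).take c, (List.finRange T).drop (c+1), ?_, ?_⟩
  · conv_lhs => rw [← List.take_append_drop c (List.finRange T)]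
    congr 1
    rw [List.drop_eq_getElem_cons (by simp [List.length_finRange]; omega)]
    congr 1
    rw [List.getElem_finRange]
    rfl
  · intro a ha
    rw [List.mem_take_iff_getElem] at ha
    obtain ⟨i, hi, rfl⟩ := ha
    rw [List.getElem_finRange]
    simp only [Bool.not_eq_true', decide_eq_false_iff_not, not_le, Fin.coe_cast]
    omega

lemma find?_liftList {m T : ℕ} (S : Finset (Fin m)) (th : Fin m → ℕ)
    (Rem : Finset (Fin m × Fin T))
    (hRem : ∀ p : Fin m × Fin T, p ∈ Rem ↔ p.1 ∈ S ∧ th p.1 ≤ p.2.val)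
    (l : List (Fin m)) (g₀ : Fin m) (hlt : th g₀ < T)
    (h0 : l.find? (fun g => decide (g ∈ S ∧ th g < T)) = some g₀) :
    (liftList T l).find? (fun q => decide (q ∈ Rem)) = some (g₀, ⟨th g₀, hlt⟩) := by
  induction l with
  | nil => simp at h0
  | cons g l ih =>
    simp only [liftList, List.flatMap_cons, List.find?_append]
    by_cases hg : g ∈ S ∧ th g < T
    · have hg0 : g₀ = g := by
        rw [List.find?_cons_of_pos (p := fun g => decide (g ∈ S ∧ th g < T)) (a := g) (by simpa using hg)] at h0
        exact (Option.some.inj h0).symm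
      subst hg0
      rw [List.find?_map]
      have hfun : ((fun q => decide (q ∈ Rem)) ∘ (fun k : Fin T => (g₀, k)))
          = fun k : Fin T => decide (th g₀ ≤ k.val) := by
        funext k
        simp [hRem, hg.1]
      rw [hfun, find?_finRange (th g₀) T hlt]
      rfl
    · have hb : (List.map (fun k : Fin T => (g, k)) (List.finRange T)).find?
          (fun q => decide (q ∈ Rem)) = none := by
        rw [List.find?_map]
        rw [Option.map_eq_none_iff, List.find?_eq_none]
        intro k _
        simp only [Function.comp_apply, Bool.not_eq_true, decide_eq_false_iff_not, hRem,
          not_and, not_le]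
        intro hgS
        have := k.isLt
        by_contra hle
        exact hg ⟨hgS, by omega⟩
      rw [hb, Option.none_or]
      refine ih ?_
      rw [List.find?_cons_of_neg (p := fun g => decide (g ∈ S ∧ th g < T)) (a := g) (by simpa using hg)] at h0
      exact h0

/-- The correspondence invariant between a PS-side description (available set `S`,
counts `cnt` of copies already taken) and an RR state on the lifted instance. -/
structure Matches (n m T : ℕ) (S : Finset (Fin m)) (cnt : Fin n → Fin m → ℕ)
    (st : Finset (Fin m × Fin T) × (Fin n → Finset (Fin m × Fin T))) : Prop where
  rem : ∀ p : Fin m × Fin T, p ∈ st.1 ↔ p.1 ∈ S ∧ ∑ a, cnt a p.1 ≤ p.2.val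
  cnt_eq : ∀ a g, ((st.2 a).filter (fun p => p.1 = g)).card = cnt a g
  bdl : ∀ a, ∀ p ∈ st.2 a, p.2.val < ∑ b, cnt b p.1

lemma sum_cnt_succ {n m : ℕ} (cnt : Fin n → Fin m → ℕ) (i : Fin n) (g₀ : Fin m) (g : Fin m) :
    (∑ a, if a = i ∧ g = g₀ then cnt a g + 1 else cnt a g)
      = (∑ a, cnt a g) + (if g = g₀ then 1 else 0) := by
  by_cases hgg : g = g₀
  · subst hgg
    rw [Finset.sum_congr rfl (fun a _ => show (if a = i ∧ g = g then cnt a g + 1 else cnt a g)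
        = cnt a g + (if a = i then 1 else 0) by by_cases ha : a = i <;> simp [ha])]
    rw [Finset.sum_add_distrib, Finset.sum_ite_eq' Finset.univ i (fun _ => 1)]
    simp
  · simp [hgg]

lemma rr_pick_step (n m T : ℕ) (hn : 0 < n) (pref : Fin n → List (Fin m))
    (s : ℕ) (S : Finset (Fin m)) (cnt : Fin n → Fin m → ℕ)
    (hM : Matches n m T S cnt (rrState n hn (fun b => liftList T (pref b)) s))
    (i : Fin n) (hi : (i : ℕ) = s % n) (g₀ : Fin m)
    (htop : psTop pref S i = some g₀) (hlt : ∑ a, cnt a g₀ < T) :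
    Matches n m T S (fun a g => if a = i ∧ g = g₀ then cnt a g + 1 else cnt a g)
      (rrState n hn (fun b => liftList T (pref b)) (s+1)) := by
  set st := rrState n hn (fun b => liftList T (pref b)) s with hst
  have hg₀S : g₀ ∈ S := by
    have := List.find?_some htop
    simpa using this
  set p₀ : Fin m × Fin T := (g₀, ⟨∑ a, cnt a g₀, hlt⟩) with hp₀
  have h0 : (pref i).find? (fun g => decide (g ∈ S ∧ (∑ a, cnt a g) < T)) = some g₀ := by
    refine find?_mono htop (by simp [hg₀S, hlt]) (fun y hy => ?_)
    simp only [decide_eq_true_eq] at hy ⊢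
    exact hy.1
  have hfind : (liftList T (pref i)).find? (fun q => decide (q ∈ st.1)) = some p₀ :=
    find?_liftList S (fun g => ∑ a, cnt a g) st.1 hM.rem (pref i) g₀ hlt h0
  have hagent : (⟨s % n, Nat.mod_lt s hn⟩ : Fin n) = i := Fin.ext hi.symm
  have hstep : rrState n hn (fun b => liftList T (pref b)) (s+1)
      = (st.1.erase p₀, Function.update st.2 i (insert p₀ (st.2 i))) := by
    rw [rrState]
    simp only [← hst, hagent, hfind]
  have hp₀notmem : p₀ ∉ st.2 i := fun hmem => by
    have := hM.bdl i p₀ hmem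
    simp [hp₀] at this
  constructor
  · intro p
    rw [hstep]
    simp only [Finset.mem_erase, hM.rem, sum_cnt_succ]
    obtain ⟨g, k⟩ := p
    dsimp only
    by_cases hgg : g = g₀
    · subst hgg
      have hppeq : ((g, k) = p₀) ↔ (k : ℕ) = ∑ a, cnt a g := by
        simp [hp₀, Prod.ext_iff, Fin.ext_iff]
      constructor
      · rintro ⟨hne, hS, hle⟩
        have hk : (k : ℕ) ≠ ∑ a, cnt a g := fun h => hne (hppeq.mpr h)
        refine ⟨hS, ?_⟩
        rw [if_pos rfl]
        omega
      · rintro ⟨hS, hle⟩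
        rw [if_pos rfl] at hle
        refine ⟨fun h => ?_, hS, by omega⟩
        have := hppeq.mp h
        omega
    · simp only [if_neg hgg, Nat.add_zero]
      constructor
      · rintro ⟨_, h⟩; exact h
      · intro h
        refine ⟨fun he => hgg ?_, h⟩
        rw [hp₀] at he
        exact congrArg Prod.fst he
  · intro a g
    rw [hstep]
    by_cases ha : a = i
    · subst ha
      simp only [Function.update_self]
      rw [Finset.filter_insert]
      by_cases hg : g = g₀
      · subst hg
        rw [if_pos rfl]
        rw [Finset.card_insert_of_notMem (fun hmem => hp₀notmem (Finset.mem_filter.mp hmem).1)]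
        rw [hM.cnt_eq]
        simp
      · rw [if_neg (show ¬ p₀.1 = g by simp [hp₀]; exact fun h => hg h.symm)]
        rw [hM.cnt_eq]
        simp [hg]
    · simp only [Function.update_of_ne ha]
      rw [hM.cnt_eq]
      simp [ha]
  · intro a p hp
    rw [hstep] at hp
    simp only [sum_cnt_succ]
    by_cases ha : a = i
    · subst ha
      simp only [Function.update_self, Finset.mem_insert] at hp
      rcases hp with rfl | hp
      · simp [hp₀]
      · have := hM.bdl a p hp
        by_cases h : p.1 = g₀
        · rw [h] at this ⊢
          simp
          omega
        · simp [h]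
          omega
    · simp only [Function.update_of_ne ha] at hp
      have := hM.bdl a p hp
      by_cases h : p.1 = g₀
      · rw [h] at this ⊢
        simp
        omega
      · simp [h]
        omega

/-- Number of picks of agent `a` among RR stages `v < u` (relative offsets),
when picking cyclically. -/
def cntUp (n : ℕ) (u : ℕ) (a : Fin n) : ℕ := u / n + if (a : ℕ) < u % n then 1 else 0

lemma cntUp_succ (n : ℕ) (hn : 0 < n) (u : ℕ) (a : Fin n) :
    cntUp n (u+1) a = cntUp n u a + if (a : ℕ) = u % n then 1 else 0 := by
  have h1 := Nat.div_add_mod u n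
  have h2 : u % n < n := Nat.mod_lt u hn
  have ha := a.isLt
  by_cases hc : u % n + 1 = n
  · have he : u + 1 = n * (u / n + 1) := by rw [Nat.mul_add, Nat.mul_one]; omega
    have hm : (u+1) % n = 0 := by rw [he]; exact Nat.mul_mod_right n _
    have hd : (u+1) / n = u / n + 1 := by rw [he]; exact Nat.mul_div_cancel_left _ hn
    rw [cntUp, cntUp, hm, hd]
    split_ifs <;> omega
  · have he : u + 1 = (u % n + 1) + n * (u / n) := by omega
    have hm : (u+1) % n = u % n + 1 := by
      rw [he, Nat.add_mul_mod_self_left]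
      exact Nat.mod_eq_of_lt (by omega)
    have hd : (u+1) / n = u / n := by
      rw [he, Nat.add_mul_div_left _ _ hn, Nat.div_eq_of_lt (by omega)]
      omega
    rw [cntUp, cntUp, hm, hd]
    split_ifs <;> omega

lemma cntUp_total (n : ℕ) (hn : 0 < n) (q : ℕ) (a : Fin n) : cntUp n (n*q) a = q := by
  rw [cntUp, Nat.mul_div_cancel_left _ hn, Nat.mul_mod_right]
  simp

lemma cntUp_le (n : ℕ) (hn : 0 < n) (u q : ℕ) (a : Fin n) (hu : u < n * q) :
    cntUp n u a ≤ q := by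
  have : u / n < q := Nat.div_lt_iff_lt_mul hn |>.mpr (Nat.mul_comm n q ▸ hu)
  rw [cntUp]
  split_ifs <;> omega

lemma cntUp_lt (n : ℕ) (hn : 0 < n) (u q : ℕ) (a : Fin n) (hu : u < n * q)
    (ha : (a : ℕ) = u % n) : cntUp n u a < q := by
  have : u / n < q := Nat.div_lt_iff_lt_mul hn |>.mpr (Nat.mul_comm n q ▸ hu)
  rw [cntUp, ha]
  simp [this]

lemma psTop_mem {n m : ℕ} {pref : Fin n → List (Fin m)} {S : Finset (Fin m)}
    {a : Fin n} {g : Fin m} (h : psTop pref S a = some g) : g ∈ S := by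
  have := List.find?_some h
  simpa using this

lemma exists_top {n m : ℕ} (pref : Fin n → List (Fin m)) (S : Finset (Fin m))
    (horder : ∀ a, IsOrder (pref a)) (hS : S.Nonempty) :
    ∃ top : Fin n → Fin m, ∀ a, psTop pref S a = some (top a) := by
  have h : ∀ a : Fin n, ∃ g, psTop pref S a = some g := by
    intro a
    obtain ⟨g, hg⟩ := hS
    have : ((pref a).find? (fun g => decide (g ∈ S))).isSome := by
      rw [List.find?_isSome]
      exact ⟨g, (horder a).2 g, by simpa using hg⟩
    obtain ⟨g', hg'⟩ := Option.isSome_iff_exists.mp this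
    exact ⟨g', hg'⟩
  choose top htop using h
  exact ⟨top, htop⟩

lemma sum_ite_top {n m : ℕ} (pref : Fin n → List (Fin m)) (S : Finset (Fin m))
    (top : Fin n → Fin m) (htop : ∀ a, psTop pref S a = some (top a)) (q : ℕ) (g : Fin m) :
    (∑ a, if top a = g then q else 0) = q * (psN pref S g).card := by
  rw [show (∑ a, if top a = g then q else 0)
      = ∑ a, if psTop pref S a = some g then q else 0 from
    Finset.sum_congr rfl (fun a _ => by by_cases h : top a = g <;> simp [htop a, h])]
  rw [← Finset.sum_filter, Finset.sum_const, smul_eq_mul, psN]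
  ring_nf

lemma sum_card_psN {n m : ℕ} (pref : Fin n → List (Fin m)) (S : Finset (Fin m))
    (top : Fin n → Fin m) (htop : ∀ a, psTop pref S a = some (top a)) :
    ∑ g, (psN pref S g).card = n := by
  calc ∑ g, (psN pref S g).card
      = ∑ g, ∑ a : Fin n, if top a = g then 1 else 0 :=
        Finset.sum_congr rfl (fun g _ => by rw [sum_ite_top pref S top htop 1 g, one_mul])
    _ = ∑ a : Fin n, ∑ g, if top a = g then 1 else 0 := Finset.sum_comm
    _ = ∑ _a : Fin n, 1 := Finset.sum_congr rfl (fun a _ => by simp)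
    _ = n := by simp

lemma psN_eq_empty {n m : ℕ} {pref : Fin n → List (Fin m)} {S : Finset (Fin m)}
    {g : Fin m} (hg : g ∉ S) : psN pref S g = ∅ := by
  ext a
  simp only [psN, Finset.mem_filter, Finset.mem_univ, true_and, Finset.notMem_empty, iff_false]
  exact fun h => hg (psTop_mem h)

lemma active_nonempty {n m : ℕ} (hn : 0 < n) {pref : Fin n → List (Fin m)}
    {S : Finset (Fin m)} (horder : ∀ a, IsOrder (pref a)) (hS : S.Nonempty) :
    (psActive pref S).Nonempty := by
  obtain ⟨top, htop⟩ := exists_top pref S horder hS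
  refine ⟨top ⟨0, hn⟩, ?_⟩
  rw [psActive, Finset.mem_filter]
  refine ⟨psTop_mem (htop ⟨0, hn⟩), ⟨⟨0, hn⟩, ?_⟩⟩
  rw [psN, Finset.mem_filter]
  exact ⟨Finset.mem_univ _, htop ⟨0, hn⟩⟩

lemma rr_round_steps (n m T : ℕ) (hn : 0 < n) (pref : Fin n → List (Fin m))
    (S : Finset (Fin m)) (top : Fin n → Fin m)
    (htop : ∀ a, psTop pref S a = some (top a))
    (cnt : Fin n → Fin m → ℕ) (q : ℕ)
    (hbound : ∀ g ∈ S, (∑ a, cnt a g) + q * (psN pref S g).card ≤ T)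
    (s₀ : ℕ) (hs₀ : s₀ % n = 0)
    (hM : Matches n m T S cnt (rrState n hn (fun b => liftList T (pref b)) s₀)) :
    ∀ u, u ≤ n * q → Matches n m T S
      (fun a g => cnt a g + if top a = g then cntUp n u a else 0)
      (rrState n hn (fun b => liftList T (pref b)) (s₀ + u)) := by
  intro u
  induction u with
  | zero =>
    intro _
    have he : (fun a g => cnt a g + if top a = g then cntUp n 0 a else 0) = cnt := by
      funext a g
      simp [cntUp]
    rw [he, Nat.add_zero]
    exact hM
  | succ u ih =>
    intro hu1
    have hu : u < n * q := by omega
    have ihM := ih (by omega)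
    set i : Fin n := ⟨u % n, Nat.mod_lt u hn⟩ with hidef
    have hii : (i : ℕ) = u % n := rfl
    have hi : (i : ℕ) = (s₀ + u) % n := by
      rw [hii, Nat.add_mod, hs₀, Nat.zero_add, Nat.mod_eq_of_lt (Nat.mod_lt u hn)]
    have htopiS : top i ∈ S := by
      have := List.find?_some (htop i)
      simpa using this
    have hsum1 : (∑ a, if top a = top i then cntUp n u a else 0)
        < ∑ a, if top a = top i then q else 0 := by
      refine Finset.sum_lt_sum (fun a _ => ?_) ⟨i, Finset.mem_univ i, ?_⟩
      · by_cases h : top a = top i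
        · simpa [h] using cntUp_le n hn u q a hu
        · simp [h]
      · simpa using cntUp_lt n hn u q i hu hii
    have hsum2 : (∑ a, if top a = top i then q else 0) = q * (psN pref S (top i)).card :=
      sum_ite_top pref S top htop q (top i)
    have hlt : (∑ a, (cnt a (top i) + if top a = top i then cntUp n u a else 0)) < T := by
      rw [Finset.sum_add_distrib]
      have := hbound (top i) htopiS
      omega
    have hstep := rr_pick_step n m T hn pref (s₀+u) S _ ihM i hi (top i) (htop i) hlt
    have hfun : (fun a g => if a = i ∧ g = top i
          then (cnt a g + if top a = g then cntUp n u a else 0) + 1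
          else (cnt a g + if top a = g then cntUp n u a else 0))
        = (fun a g => cnt a g + if top a = g then cntUp n (u+1) a else 0) := by
      funext a g
      rw [cntUp_succ n hn u a]
      by_cases hai : a = i
      · subst hai
        by_cases hg : g = top i
        · subst hg
          simp [hii]
          omega
        · have h2 : ¬ (top i = g) := fun h => hg h.symm
          simp [h2, hg]
      · have hav : ¬ ((a : ℕ) = u % n) := fun h => hai (Fin.ext (by rw [h, hii]))
        simp only [if_neg (fun hc : a = i ∧ g = top i => hai hc.1), if_neg hav, Nat.add_zero]
    rw [show s₀ + (u+1) = (s₀ + u) + 1 by omega]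
    rw [← hfun]
    exact hstep

open scoped Classical in
lemma psState_succ {n m : ℕ} (pref : Fin n → List (Fin m)) (k : ℕ)
    (hA : (psActive pref (psState pref k).1).Nonempty) :
    psState pref (k+1) =
      ((psState pref k).1.filter (fun g => ¬(g ∈ psActive pref (psState pref k).1 ∧
          (1 - ∑ a, (psState pref k).2.1 a g) / ((psN pref (psState pref k).1 g).card : ℝ)
          = (psActive pref (psState pref k).1).inf' hA
              (fun g => (1 - ∑ a, (psState pref k).2.1 a g) /
                ((psN pref (psState pref k).1 g).card : ℝ)))),
        fun a g => if psTop pref (psState pref k).1 a = some g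
          then (psState pref k).2.1 a g + (psActive pref (psState pref k).1).inf' hA
              (fun g => (1 - ∑ a, (psState pref k).2.1 a g) /
                ((psN pref (psState pref k).1 g).card : ℝ))
          else (psState pref k).2.1 a g,
        (psActive pref (psState pref k).1).inf' hA
              (fun g => (1 - ∑ a, (psState pref k).2.1 a g) /
                ((psN pref (psState pref k).1 g).card : ℝ))) := by
  rw [psState]
  simp only [dif_pos hA]

lemma psState_succ_of_not {n m : ℕ} (pref : Fin n → List (Fin m)) (k : ℕ)
    (hA : ¬ (psActive pref (psState pref k).1).Nonempty) :
    psState pref (k+1) = psState pref k := by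
  rw [psState]
  simp only [dif_neg hA]

/-- The big induction: after `k` PS steps, the PS state corresponds exactly to
an RR state on the lifted instance after some whole number of rounds. -/
lemma main_inv (n m : ℕ) (hn : 0 < n) (pref : Fin n → List (Fin m))
    (horder : ∀ a, IsOrder (pref a)) (T : ℕ) (hT : T = n.factorial ^ m) (k : ℕ) :
    ∃ (r : ℕ) (cnt : Fin n → Fin m → ℕ),
      (psState pref k).1.card ≤ m - k ∧
      (∀ a g, (psState pref k).2.1 a g = (cnt a g : ℝ) / T) ∧
      Matches n m T (psState pref k).1 cnt
        (rrState n hn (fun b => liftList T (pref b)) (n * r)) ∧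
      (∀ g, g ∉ (psState pref k).1 → ∑ a, cnt a g = T) ∧
      (∀ g ∈ (psState pref k).1, ∑ a, cnt a g < T) ∧
      (∀ g ∈ (psState pref k).1, n.factorial ^ (psState pref k).1.card ∣ (T - ∑ a, cnt a g)) ∧
      n * r = ∑ g, ∑ a, cnt a g := by
  have hT0 : 0 < T := hT ▸ pow_pos (Nat.factorial_pos n) m
  induction k with
  | zero =>
    refine ⟨0, fun _ _ => 0, ?_, ?_, ⟨?_, ?_, ?_⟩, ?_, ?_, ?_, ?_⟩
    · simp [psState]
    · intro a g; simp [psState]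
    · intro p; simp [rrState, psState]
    · intro a g; simp [rrState]
    · intro a p hp; simp [rrState] at hp
    · intro g hg; simp [psState] at hg
    · intro g _; simpa using hT0
    · intro g _
      have h1 : (psState pref 0).1 = Finset.univ := by simp [psState]
      rw [h1]
      simp only [Finset.card_univ, Fintype.card_fin, Nat.sub_zero]
      rw [hT]
      simp
    · simp
  | succ k ih =>
    obtain ⟨r, cnt, hcard, hx, hM, hout, hin, hdvd, hr⟩ := ih
    by_cases hA : (psActive pref (psState pref k).1).Nonempty
    · -- the active case: one full PS step, `n*q` RR picks
      have hps := psState_succ pref k hA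
      set x := (psState pref k).2.1 with hxdef
      set S := (psState pref k).1 with hSdef
      set tg : Fin m → ℝ :=
        fun g => (1 - ∑ a, x a g) / ((psN pref S g).card : ℝ) with htgdef
      set t := (psActive pref S).inf' hA tg with htdef
      have hSne : S.Nonempty := by
        obtain ⟨g, hg⟩ := hA
        exact ⟨g, (Finset.mem_filter.mp hg).1⟩
      obtain ⟨top, htop⟩ := exists_top pref S horder hSne
      obtain ⟨gs, hgsA, hgseq⟩ := Finset.exists_mem_eq_inf' hA tg
      have hgsS : gs ∈ S := (Finset.mem_filter.mp hgsA).1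
      have hcgs : 0 < (psN pref S gs).card :=
        Finset.card_pos.mpr (Finset.mem_filter.mp hgsA).2
      have hcard1 : 1 ≤ S.card := Finset.Nonempty.card_pos hSne
      have hcn : ∀ g, (psN pref S g).card ≤ n := fun g => by
        calc (psN pref S g).card ≤ (Finset.univ : Finset (Fin n)).card :=
          Finset.card_le_card (Finset.filter_subset _ _)
        _ = n := by simp
      have hcdvd : ∀ g, 0 < (psN pref S g).card → (psN pref S g).card ∣ n.factorial :=
        fun g h => Nat.dvd_factorial h (hcn g)
      have hdvdgs : n.factorial ^ S.card ∣ T - ∑ a, cnt a gs := hdvd gs hgsS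
      have hconslt : ∑ a, cnt a gs < T := hin gs hgsS
      have hconsle : ∀ g, ∑ a, cnt a g ≤ T := fun g => by
        by_cases h : g ∈ S
        · exact le_of_lt (hin g h)
        · exact le_of_eq (hout g h)
      set q := (T - ∑ a, cnt a gs) / (psN pref S gs).card with hqdef
      have hcdvd2 : (psN pref S gs).card ∣ T - ∑ a, cnt a gs :=
        dvd_trans (hcdvd gs hcgs)
          (dvd_trans (dvd_pow_self _ (by omega : S.card ≠ 0)) hdvdgs)
      have hqc : q * (psN pref S gs).card = T - ∑ a, cnt a gs := Nat.div_mul_cancel hcdvd2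
      have hfacq : n.factorial ^ (S.card - 1) ∣ q := by
        obtain ⟨e, he⟩ := hcdvd gs hcgs
        obtain ⟨d, hd⟩ := hdvdgs
        have hs : n.factorial ^ S.card
            = n.factorial ^ (S.card - 1) * ((psN pref S gs).card * e) := by
          have h1 : S.card - 1 + 1 = S.card := by omega
          rw [← he]
          conv_lhs => rw [← h1, pow_succ]
        refine ⟨e * d, ?_⟩
        have h2 : q * (psN pref S gs).card
            = (n.factorial ^ (S.card - 1) * (e * d)) * (psN pref S gs).card := by
          rw [hqc, hd, hs]; ring
        exact Nat.eq_of_mul_eq_mul_right hcgs h2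
      have hq1 : 1 ≤ q := by
        have h1 : (psN pref S gs).card ≤ n.factorial :=
          le_trans (hcn gs) (Nat.self_le_factorial n)
        have h2 : n.factorial ≤ n.factorial ^ S.card := Nat.le_self_pow (by omega) _
        have h3 : n.factorial ^ S.card ≤ T - ∑ a, cnt a gs :=
          Nat.le_of_dvd (by omega) hdvdgs
        rcases Nat.eq_zero_or_pos q with h | h
        · rw [h, Nat.zero_mul] at hqc
          have := Nat.factorial_pos n
          omega
        · omega
      have hTR : (0:ℝ) < T := by exact_mod_cast hT0
      have hsx : ∀ g, ∑ a, x a g = ((∑ a, cnt a g : ℕ) : ℝ) / T := by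
        intro g
        rw [Finset.sum_congr rfl (fun a _ => hx a g), ← Finset.sum_div]
        congr 1
        rw [Nat.cast_sum]
      have htg_eq : ∀ g, tg g = (((T : ℝ) - (∑ a, cnt a g : ℕ)) /
          ((T : ℝ) * ((psN pref S g).card : ℕ))) := by
        intro g
        rw [htgdef]
        simp only
        rw [hsx g]
        by_cases hc : ((psN pref S g).card : ℝ) = 0
        · rw [hc]
          simp
        · field_simp
      have hqcR : (q:ℝ) * ((psN pref S gs).card : ℕ) = (T:ℝ) - (∑ a, cnt a gs : ℕ) := by
        calc (q:ℝ) * ((psN pref S gs).card : ℕ)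
            = ((q * (psN pref S gs).card : ℕ) : ℝ) := by push_cast; ring
          _ = ((T - ∑ a, cnt a gs : ℕ) : ℝ) := by rw [hqc]
          _ = (T:ℝ) - (∑ a, cnt a gs : ℕ) := Nat.cast_sub hconslt.le
      have hcgsR : (0:ℝ) < ((psN pref S gs).card : ℝ) := by exact_mod_cast hcgs
      have htgq : tg gs = (q : ℝ) / T := by
        rw [htg_eq gs, ← hqcR, mul_comm (q:ℝ) _, mul_comm (T:ℝ) _,
          mul_div_mul_left _ _ (ne_of_gt hcgsR)]
      have ht : t = (q:ℝ)/T := by rw [htdef, hgseq, htgq]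
      have hkey : ∀ g ∈ psActive pref S,
          (∑ a, cnt a g) + q * (psN pref S g).card ≤ T := by
        intro g hg
        have hcg : 0 < (psN pref S g).card := Finset.card_pos.mpr (Finset.mem_filter.mp hg).2
        have hcgR : (0:ℝ) < ((psN pref S g).card : ℝ) := by exact_mod_cast hcg
        have hgS : g ∈ S := (Finset.mem_filter.mp hg).1
        have hconsg : ∑ a, cnt a g < T := hin g hgS
        have hle : t ≤ tg g := by
          rw [htdef]
          exact Finset.inf'_le tg hg
        rw [ht, htg_eq g] at hle
        rw [div_le_div_iff₀ hTR (by exact mul_pos hTR hcgR)] at hle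
        have h2 : (q:ℝ) * ((psN pref S g).card : ℝ) ≤ (T:ℝ) - ((∑ a, cnt a g : ℕ) : ℝ) := by
          nlinarith [hle, hTR]
        have h3 : (q:ℝ) * ((psN pref S g).card : ℝ) ≤ ((T - ∑ a, cnt a g : ℕ) : ℝ) := by
          rw [Nat.cast_sub hconsg.le]
          exact h2
        have h4 : q * (psN pref S g).card ≤ T - ∑ a, cnt a g := by exact_mod_cast h3
        omega
      have hbound : ∀ g ∈ S, (∑ a, cnt a g) + q * (psN pref S g).card ≤ T := by
        intro g hgS
        by_cases hact : g ∈ psActive pref S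
        · exact hkey g hact
        · have hc0 : psN pref S g = ∅ := Finset.not_nonempty_iff_eq_empty.mp
            (fun hne => hact (Finset.mem_filter.mpr ⟨hgS, hne⟩))
          rw [hc0]
          simpa using le_of_lt (hin g hgS)
      have hM2 := rr_round_steps n m T hn pref S top htop cnt q hbound (n*r)
        (Nat.mul_mod_right n r) hM (n*q) (le_refl _)
      rw [show (fun a g => cnt a g + if top a = g then cntUp n (n*q) a else 0)
          = (fun a g => cnt a g + if top a = g then q else 0) from
        funext fun a => funext fun g => by rw [cntUp_total n hn q a]] at hM2
      rw [show n*r + n*q = n*(r+q) from by ring] at hM2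
      have hcons' : ∀ g, (∑ a, (cnt a g + if top a = g then q else 0))
          = (∑ a, cnt a g) + q * (psN pref S g).card := by
        intro g
        rw [Finset.sum_add_distrib, sum_ite_top pref S top htop q g]
      have hiff : ∀ g ∈ psActive pref S,
          (tg g = t ↔ (∑ a, cnt a g) + q * (psN pref S g).card = T) := by
        intro g hg
        have hcg : 0 < (psN pref S g).card := Finset.card_pos.mpr (Finset.mem_filter.mp hg).2
        have hcgR : (0:ℝ) < ((psN pref S g).card : ℝ) := by exact_mod_cast hcg
        have hgS : g ∈ S := (Finset.mem_filter.mp hg).1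
        have hconsg : ∑ a, cnt a g < T := hin g hgS
        rw [ht, htg_eq g]
        rw [div_eq_div_iff (by exact (mul_pos hTR hcgR).ne') hTR.ne']
        constructor
        · intro h
          have h2 : (T:ℝ) - ((∑ a, cnt a g : ℕ) : ℝ)
              = (q:ℝ) * ((psN pref S g).card : ℝ) := by
            have h3 : ((T:ℝ) - ((∑ a, cnt a g : ℕ) : ℝ)) * T
                = ((q:ℝ) * ((psN pref S g).card : ℝ)) * T := by rw [h]; ring
            exact mul_right_cancel₀ hTR.ne' h3
          have h4 : ((∑ a, cnt a g : ℕ) : ℝ) + (q:ℝ) * ((psN pref S g).card : ℝ)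
              = (T:ℝ) := by linarith
          exact_mod_cast h4
        · intro h
          have h4 : ((∑ a, cnt a g : ℕ) : ℝ) + (q:ℝ) * ((psN pref S g).card : ℝ)
              = (T:ℝ) := by exact_mod_cast congrArg (fun z : ℕ => (z : ℝ)) h
          linear_combination (-(T:ℝ)) * h4
      have hSnew : ∀ g, (g ∈ (psState pref (k+1)).1
          ↔ (g ∈ S ∧ (∑ a, cnt a g) + q * (psN pref S g).card < T)) := by
        intro g
        simp only [hps, Finset.mem_filter]
        by_cases hact : g ∈ psActive pref S
        · have hiffg := hiff g hact
          have hle := hkey g hact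
          constructor
          · rintro ⟨hgS, hnot⟩
            refine ⟨hgS, ?_⟩
            have hne : (∑ a, cnt a g) + q * (psN pref S g).card ≠ T :=
              fun h => hnot ⟨hact, hiffg.mpr h⟩
            omega
          · rintro ⟨hgS, hlt2⟩
            exact ⟨hgS, fun hc => by have := hiffg.mp hc.2; omega⟩
        · constructor
          · rintro ⟨hgS, _⟩
            have hc0 : psN pref S g = ∅ := Finset.not_nonempty_iff_eq_empty.mp
              (fun hne => hact (Finset.mem_filter.mpr ⟨hgS, hne⟩))
            refine ⟨hgS, ?_⟩
            rw [hc0]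
            simpa using hin g hgS
          · rintro ⟨hgS, _⟩
            exact ⟨hgS, fun hc => hact hc.1⟩
      have hgsT : (∑ a, cnt a gs) + q * (psN pref S gs).card = T := by
        rw [hqc]
        omega
      have hgs_out : gs ∉ (psState pref (k+1)).1 := fun h => by
        have h2 := ((hSnew gs).mp h).2
        omega
      have hsub : (psState pref (k+1)).1 ⊆ S.erase gs := by
        intro g hg
        rw [Finset.mem_erase]
        exact ⟨fun he => hgs_out (he ▸ hg), ((hSnew g).mp hg).1⟩
      have hcard' : (psState pref (k+1)).1.card ≤ S.card - 1 := by
        have := Finset.card_le_card hsub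
        rw [Finset.card_erase_of_mem hgsS] at this
        exact this
      refine ⟨r + q, fun a g => cnt a g + if top a = g then q else 0,
        ?_, ?_, ?_, ?_, ?_, ?_, ?_⟩
      · omega
      · intro a g
        rw [hps]
        simp only
        rw [htop a]
        by_cases h : top a = g
        · rw [if_pos (by rw [h]), if_pos h, hx a g, ht]
          push_cast
          ring
        · rw [if_neg (by simpa using h), if_neg h, hx a g]
          simp
      · constructor
        · intro p
          rw [hM2.rem p]
          constructor
          · rintro ⟨h1, h2⟩
            rw [hcons' p.1] at h2
            have hp2 := p.2.isLt
            refine ⟨(hSnew p.1).mpr ⟨h1, by omega⟩, ?_⟩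
            rw [hcons' p.1]
            omega
          · rintro ⟨h1, h2⟩
            exact ⟨((hSnew p.1).mp h1).1, h2⟩
        · exact hM2.cnt_eq
        · exact hM2.bdl
      · intro g hg
        rw [hcons' g]
        by_cases hgS : g ∈ S
        · have h1 : ¬ ((∑ a, cnt a g) + q * (psN pref S g).card < T) :=
            fun h => hg ((hSnew g).mpr ⟨hgS, h⟩)
          have h2 := hbound g hgS
          omega
        · rw [psN_eq_empty hgS, hout g hgS]
          simp
      · intro g hg
        rw [hcons' g]
        exact ((hSnew g).mp hg).2
      · intro g hg
        have hgS := ((hSnew g).mp hg).1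
        rw [hcons' g]
        have hd1 : n.factorial ^ (S.card - 1) ∣ T - ∑ a, cnt a g :=
          (pow_dvd_pow _ (by omega)).trans (hdvd g hgS)
        have hd2 : n.factorial ^ (S.card - 1) ∣ q * (psN pref S g).card :=
          Dvd.dvd.mul_right hfacq _
        have hd3 : n.factorial ^ (S.card - 1)
            ∣ T - ((∑ a, cnt a g) + q * (psN pref S g).card) := by
          rw [show T - ((∑ a, cnt a g) + q * (psN pref S g).card)
              = (T - ∑ a, cnt a g) - q * (psN pref S g).card from by omega]
          exact Nat.dvd_sub hd1 hd2
        exact (pow_dvd_pow _ hcard').trans hd3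
      · calc n * (r + q) = (∑ g, ∑ a, cnt a g) + q * n := by
              rw [Nat.mul_add, hr, Nat.mul_comm n q]
          _ = ∑ g, ((∑ a, cnt a g) + q * (psN pref S g).card) := by
              rw [Finset.sum_add_distrib, ← Finset.mul_sum, sum_card_psN pref S top htop]
          _ = ∑ g, (∑ a, (cnt a g + if top a = g then q else 0)) :=
              Finset.sum_congr rfl (fun g _ => (hcons' g).symm)
    · -- inactive: the available set is already empty and nothing changes
      have hE := psState_succ_of_not pref k hA
      have hS0 : (psState pref k).1 = ∅ := by
        by_contra h
        exact hA (active_nonempty hn horder (Finset.nonempty_iff_ne_empty.mpr h))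
      refine ⟨r, cnt, ?_, ?_, ?_, ?_, ?_, ?_, ?_⟩
      · rw [hE, hS0]
        simp
      · rw [hE]
        exact hx
      · rw [hE]
        exact hM
      · rw [hE]
        exact hout
      · rw [hE]
        exact hin
      · rw [hE]
        exact hdvd
      · exact hr

/-- Probabilistic Serial equals Round-Robin on the lifted instance
with `T = (n!)^m` indivisible copies of each good. -/
theorem stmt10 (n m : ℕ) (hn : 0 < n) (pref : Fin n → List (Fin m))
    (horder : ∀ a, IsOrder (pref a)) :
    ∀ (a : Fin n) (g : Fin m),
      psAlloc pref a g =
        (((rr n hn (fun b => liftList (n.factorial ^ m) (pref b)) a).filter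
            (fun q => q.1 = g)).card : ℝ) / ((n.factorial : ℝ) ^ m) := by
  intro a g
  obtain ⟨r, cnt, hcard, hx, hM, hout, hin, hdvd, hr⟩ :=
    main_inv n m hn pref horder (n.factorial ^ m) rfl m
  have hSm : (psState pref m).1 = ∅ := by
    rw [Nat.sub_self] at hcard
    exact Finset.card_eq_zero.mp (Nat.le_zero.mp hcard)
  have hall : ∀ g', (∑ a', cnt a' g') = n.factorial ^ m := fun g' =>
    hout g' (by simp [hSm])
  have hnr : n * r = m * n.factorial ^ m := by
    rw [hr, Finset.sum_congr rfl (fun g' _ => hall g'), Finset.sum_const,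
      Finset.card_univ, Fintype.card_fin, smul_eq_mul]
  have hcardP : Fintype.card (Fin m × Fin (n.factorial ^ m)) = n * r := by
    rw [Fintype.card_prod, Fintype.card_fin, Fintype.card_fin, hnr]
  rw [psAlloc, hx a g, rr, hcardP, hM.cnt_eq a g]
  rw [show ((n.factorial : ℝ)) ^ m = ((n.factorial ^ m : ℕ) : ℝ) from by push_cast; ring]
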